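/- Let k ≥ 2 be an integer, let n be a positive multiple of k, put m = n/k, and partition [n] = {1,…,n} into the k consecutive blocks B_i = {(i−1)m+1, …, im} for i = 1,…,k. Let Q be the set of permutations σ of [n] with σ(B_i) = B_i for every i. Then there exists a subset C ⊆ Q such that k · |C| ≥ (m!)^{k−1} and any two distinct permutations σ, τ ∈ C differ on at least two blocks, i.e., there exist indices i ≠ j such that the restrictions of σ and τ to B_i differ and the restrictions of σ and τ to B_j differ. -/

import Mathlib

open Equiv

def blockEquiv (k m : ℕ) (hm : 0 < m) : Fin (k * m) ≃ Fin k × Fin m where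
  toFun x := (⟨(x : ℕ) / m, (Nat.div_lt_iff_lt_mul hm).mpr x.2⟩,
    ⟨(x : ℕ) % m, Nat.mod_lt _ hm⟩)
  invFun p := ⟨(p.1 : ℕ) * m + (p.2 : ℕ), by
      calc (p.1 : ℕ) * m + (p.2 : ℕ) < (p.1 : ℕ) * m + m := Nat.add_lt_add_left p.2.2 _
        _ = ((p.1 : ℕ) + 1) * m := by ring
        _ ≤ k * m := Nat.mul_le_mul_right m p.1.2⟩
  left_inv x := by
    ext
    exact Nat.div_add_mod' _ _
  right_inv p := by
    ext
    · show ((p.1 : ℕ) * m + (p.2 : ℕ)) / m = p.1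
      rw [add_comm, Nat.add_mul_div_right _ _ hm, Nat.div_eq_of_lt p.2.2, zero_add]
    · show ((p.1 : ℕ) * m + (p.2 : ℕ)) % m = p.2
      rw [add_comm, Nat.add_mul_mod_self_right, Nat.mod_eq_of_lt p.2.2]

lemma prod_cancel_single {k : ℕ} {M : Type*} [Group M] (g h : Fin k → M) (i : Fin k)
    (hgh : ∀ j, j ≠ i → g j = h j)
    (hp : ((List.finRange k).map g).prod = ((List.finRange k).map h).prod) :
    g i = h i := by
  obtain ⟨s, t, hst⟩ := List.append_of_mem (List.mem_finRange i)
  have hnd := List.nodup_finRange k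
  rw [hst, List.nodup_append] at hnd
  have his : i ∉ s := fun hi => hnd.2.2 i hi i List.mem_cons_self rfl
  have hit : i ∉ t := fun hi => (List.nodup_cons.1 hnd.2.1).1 hi
  have hsm : s.map g = s.map h :=
    List.map_congr_left fun a ha => hgh a (fun e => his (e ▸ ha))
  have htm : t.map g = t.map h :=
    List.map_congr_left fun a ha => hgh a (fun e => hit (e ▸ ha))
  rw [hst, List.map_append, List.prod_append, List.map_cons, List.prod_cons,
    List.map_append, List.prod_append, List.map_cons, List.prod_cons, hsm, htm] at hp
  exact mul_right_cancel (mul_left_cancel hp)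

theorem exists_family_differing_on_two_blocks (k n m : ℕ) (hk : 2 ≤ k) (hn : 0 < n)
    (hnm : n = k * m) :
    ∃ C : Finset (Equiv.Perm (Fin n)),
      (∀ σ ∈ C, ∀ x : Fin n, ((σ x : ℕ) / m = (x : ℕ) / m)) ∧
      (Nat.factorial m) ^ (k - 1) ≤ k * C.card ∧
      (∀ σ ∈ C, ∀ τ ∈ C, σ ≠ τ →
        ∃ i j : ℕ, i ≠ j ∧
          (∃ x : Fin n, (x : ℕ) / m = i ∧ σ x ≠ τ x) ∧
          (∃ x : Fin n, (x : ℕ) / m = j ∧ σ x ≠ τ x)) := by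
  subst hnm
  have hm : 0 < m := by
    rcases Nat.eq_zero_or_pos m with hm | hm
    · subst hm; simp at hn
    · exact hm
  set e := blockEquiv k m hm with he
  set toP : (Fin k → Perm (Fin m)) → Perm (Fin (k * m)) :=
    fun g => e.trans ((Equiv.prodCongrRight g).trans e.symm) with htoP
  have key : ∀ g (p : Fin k × Fin m),
      toP g (e.symm p) = e.symm (p.1, g p.1 p.2) := by
    intro g p
    simp only [htoP, Equiv.trans_apply, Equiv.apply_symm_apply]
    rfl
  have hblock : ∀ g (x : Fin (k * m)), ((toP g x : Fin (k * m)) : ℕ) / m = (x : ℕ) / m := by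
    intro g x
    have hx : x = e.symm (e x) := (e.symm_apply_apply x).symm
    rw [hx, key]
    have h1 : ∀ p : Fin k × Fin m, ((e.symm p : Fin (k * m)) : ℕ) / m = (p.1 : ℕ) := by
      intro p
      have : (e (e.symm p)).1 = p.1 := by rw [Equiv.apply_symm_apply]
      simpa [he, blockEquiv] using congrArg Fin.val this
    rw [h1, h1]
  have hvals : ∀ g h (a : Fin k) (r : Fin m),
      toP g (e.symm (a, r)) = toP h (e.symm (a, r)) → g a r = h a r := by
    intro g h a r hgh
    rw [key, key] at hgh
    have := congrArg Prod.snd (e.symm.injective hgh)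
    exact this
  have hinj : Function.Injective toP := by
    intro g h hgh
    funext a
    ext r
    exact congrArg Fin.val (hvals g h a r (by rw [hgh]))
  set P : (Fin k → Perm (Fin m)) → Perm (Fin m) :=
    fun g => ((List.finRange k).map g).prod with hP
  obtain ⟨s, -, hs⟩ :=
    Finset.exists_le_card_fiber_of_mul_le_card_of_maps_to
      (f := P) (s := (Finset.univ : Finset (Fin k → Perm (Fin m))))
      (t := (Finset.univ : Finset (Perm (Fin m))))
      (fun a _ => Finset.mem_univ _) ⟨1, Finset.mem_univ _⟩
      (n := (Nat.factorial m) ^ (k - 1))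
      (by
        simp only [Finset.card_univ, Fintype.card_fun, Fintype.card_perm, Fintype.card_fin]
        rw [← pow_succ', Nat.sub_add_cancel (by omega)])
  refine ⟨(Finset.univ.filter fun x => P x = s).image toP, ?_, ?_, ?_⟩
  · intro σ hσ x
    obtain ⟨g, -, rfl⟩ := Finset.mem_image.1 hσ
    exact hblock g x
  · rw [Finset.card_image_of_injective _ hinj]
    calc (Nat.factorial m) ^ (k - 1) ≤ _ := hs
      _ ≤ k * _ := Nat.le_mul_of_pos_left _ (by omega)
  · intro σ hσ τ hτ hne
    obtain ⟨g, hg, rfl⟩ := Finset.mem_image.1 hσ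
    obtain ⟨h, hh, rfl⟩ := Finset.mem_image.1 hτ
    have hgh : g ≠ h := fun e => hne (congrArg toP e)
    have : ∃ i, g i ≠ h i := by
      by_contra hc
      push_neg at hc
      exact hgh (funext hc)
    obtain ⟨i, hi⟩ := this
    have : ∃ j, j ≠ i ∧ g j ≠ h j := by
      by_contra hc
      push_neg at hc
      have hPg : P g = s := (Finset.mem_filter.1 hg).2
      have hPh : P h = s := (Finset.mem_filter.1 hh).2
      exact hi (prod_cancel_single g h i hc (hPg.trans hPh.symm))
    obtain ⟨j, hji, hj⟩ := this
    have wit : ∀ a : Fin k, g a ≠ h a →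
        ∃ x : Fin (k * m), (x : ℕ) / m = (a : ℕ) ∧ toP g x ≠ toP h x := by
      intro a ha
      have : ∃ r : Fin m, g a r ≠ h a r := by
        by_contra hc
        push_neg at hc
        exact ha (Equiv.ext hc)
      obtain ⟨r, hr⟩ := this
      refine ⟨e.symm (a, r), ?_, fun hcon => hr (hvals g h a r hcon)⟩
      have : (e (e.symm (a, r))).1 = a := by rw [Equiv.apply_symm_apply]
      simpa [he, blockEquiv] using congrArg Fin.val this
    obtain ⟨x, hx1, hx2⟩ := wit i hi
    obtain ⟨y, hy1, hy2⟩ := wit j hj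
    exact ⟨(i : ℕ), (j : ℕ), fun hij => hji (Fin.ext hij.symm), ⟨x, hx1, hx2⟩, ⟨y, hy1, hy2⟩⟩
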